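/- For a primitive n-th root of unity ζ_n (n ≥ 2), the sum over 1 ≤ i ≤ n-1 of 1/(1-ζ_n^i)² equals -(n-1)(n-5)/12. -/
import Mathlib
open Finset

lemma geom_zero' {ω : ℂ} {n : ℕ} (h1 : ω ^ n = 1) (h2 : ω ≠ 1) :
    ∑ k ∈ range n, ω ^ k = 0 := by
  rw [geom_sum_eq h2, h1, sub_self, zero_div]

lemma key' {ω : ℂ} {n : ℕ} (h1 : ω ^ n = 1) (h2 : ω ≠ 1) :
    (1 - ω) * ∑ k ∈ range n, (k : ℂ) * ω ^ k = -(n : ℂ) := by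
  have tel := Finset.sum_range_sub (fun k => (k : ℂ) * ω ^ k) n
  have geo := geom_zero' h1 h2
  have expand : (1 - ω) * ∑ k ∈ range n, (k : ℂ) * ω ^ k
      = -(∑ k ∈ range n, (((k+1 : ℕ) : ℂ) * ω ^ (k+1) - (k : ℂ) * ω ^ k))
        + ω * ∑ k ∈ range n, ω ^ k := by
    rw [Finset.mul_sum, ← Finset.sum_neg_distrib, Finset.mul_sum, ← Finset.sum_add_distrib]
    refine Finset.sum_congr rfl fun k _ => ?_
    push_cast; ring
  rw [expand, tel, geo, h1]
  simp

lemma sumA' (n : ℕ) : ∑ k ∈ range n, (k : ℂ) = (n : ℂ) * ((n : ℂ) - 1) / 2 := by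
  induction n with
  | zero => simp
  | succ m ih => rw [Finset.sum_range_succ, ih]; push_cast; ring

lemma sumB' (n : ℕ) : ∑ k ∈ range n, (k : ℂ) ^ 2
    = (n : ℂ) * ((n : ℂ) - 1) * (2 * (n : ℂ) - 1) / 6 := by
  induction n with
  | zero => simp
  | succ m ih => rw [Finset.sum_range_succ, ih]; push_cast; ring

lemma inner_eval' (n : ℕ) (hn : 2 ≤ n) (k : ℕ) (hk : k ∈ range n) :
    ∑ l ∈ range n, (k : ℂ) * (l : ℂ) * (if n ∣ (k + l) then (n : ℂ) else 0)
      = (k : ℂ) * ((n : ℂ) - (k : ℂ)) * (n : ℂ) := by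
  rw [mem_range] at hk
  rcases Nat.eq_zero_or_pos k with hk0 | hk0
  · subst hk0; simp
  · have hcond : ∀ l ∈ range n, (if n ∣ (k + l) then ((k : ℂ) * (l : ℂ) * (n : ℂ)) else 0)
        = if l = n - k then ((k : ℂ) * (l : ℂ) * (n : ℂ)) else 0 := by
      intro l hl
      rw [mem_range] at hl
      congr 1
      simp only [eq_iff_iff]
      constructor
      · rintro ⟨m, hm⟩
        rcases m with _ | _ | m
        · omega
        · omega
        · have hm' : k + l = n * m + 2 * n := by rw [hm]; ring
          omega
      · intro h; exact ⟨1, by omega⟩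
    calc ∑ l ∈ range n, (k : ℂ) * (l : ℂ) * (if n ∣ (k + l) then (n : ℂ) else 0)
        = ∑ l ∈ range n, (if l = n - k then ((k : ℂ) * (l : ℂ) * (n : ℂ)) else 0) := by
          refine Finset.sum_congr rfl fun l hl => ?_
          rw [← hcond l hl]
          split <;> simp
      _ = (k : ℂ) * ((n - k : ℕ) : ℂ) * (n : ℂ) := by
          rw [Finset.sum_ite_eq' (range n) (n - k)]
          simp only [mem_range]
          rw [if_pos (by omega)]
      _ = (k : ℂ) * ((n : ℂ) - (k : ℂ)) * (n : ℂ) := by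
          rw [Nat.cast_sub (by omega)]

theorem stmt4 (n : ℕ) (hn : 2 ≤ n) (ζ : ℂ) (hζ : IsPrimitiveRoot ζ n) :
    ∑ i ∈ Finset.Icc 1 (n - 1), ((1 - ζ ^ i) ^ 2)⁻¹
      = -(((n : ℂ) - 1) * ((n : ℂ) - 5)) / 12 := by
  have hn0 : (n : ℂ) ≠ 0 := Nat.cast_ne_zero.mpr (by omega)
  set g : ℂ → ℂ := fun ω => ∑ k ∈ range n, (k : ℂ) * ω ^ k with hg
  have hζn : ζ ^ n = 1 := hζ.pow_eq_one
  -- for i in Icc 1 (n-1), ζ^i is a nontrivial n-th root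
  have hroot : ∀ i ∈ Finset.Icc 1 (n - 1), (ζ ^ i) ^ n = 1 ∧ ζ ^ i ≠ 1 := by
    intro i hi
    rw [Finset.mem_Icc] at hi
    refine ⟨by rw [← pow_mul, mul_comm, pow_mul, hζn, one_pow], ?_⟩
    exact hζ.pow_ne_one_of_pos_of_lt (by omega) (by omega)
  -- step B: term rewrite
  have step : ∀ i ∈ Finset.Icc 1 (n - 1),
      ((1 - ζ ^ i) ^ 2)⁻¹ = (g (ζ ^ i)) ^ 2 / (n : ℂ) ^ 2 := by
    intro i hi
    obtain ⟨h1, h2⟩ := hroot i hi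
    have hk := key' h1 h2
    have hne : (1 - ζ ^ i) ≠ 0 := by
      intro h; rw [sub_eq_zero] at h; exact h2 h.symm
    have hsq : (1 - ζ ^ i) ^ 2 * (g (ζ ^ i)) ^ 2 = (n : ℂ) ^ 2 := by
      have : ((1 - ζ ^ i) * g (ζ ^ i)) ^ 2 = (-(n : ℂ)) ^ 2 := by rw [hk]
      rw [mul_pow] at this; rw [this]; ring
    field_simp
    linear_combination -hsq
  rw [Finset.sum_congr rfl step]
  -- step C: extend to range n
  have hsplit : ∑ i ∈ range n, (g (ζ ^ i)) ^ 2 / (n : ℂ) ^ 2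
      = (g 1) ^ 2 / (n : ℂ) ^ 2 + ∑ i ∈ Finset.Icc 1 (n - 1), (g (ζ ^ i)) ^ 2 / (n : ℂ) ^ 2 := by
    have h1 : range n = insert 0 (Finset.Icc 1 (n - 1)) := by
      ext x
      simp only [mem_range, Finset.mem_insert, Finset.mem_Icc]
      omega
    rw [h1, Finset.sum_insert (by simp)]
    simp
  -- step D: double sum
  have hD : ∑ i ∈ range n, (g (ζ ^ i)) ^ 2
      = ∑ k ∈ range n, (k : ℂ) * ((n : ℂ) - (k : ℂ)) * (n : ℂ) := by
    have expand : ∀ i ∈ range n, (g (ζ ^ i)) ^ 2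
        = ∑ k ∈ range n, ∑ l ∈ range n, (k : ℂ) * (l : ℂ) * (ζ ^ (k + l)) ^ i := by
      intro i _
      rw [hg]
      simp only [sq, Finset.sum_mul_sum]
      refine Finset.sum_congr rfl fun k _ => Finset.sum_congr rfl fun l _ => ?_
      rw [← pow_mul, ← pow_mul, ← pow_mul, show (k + l) * i = i * k + i * l by ring, pow_add]
      ring
    rw [Finset.sum_congr rfl expand, Finset.sum_comm]
    refine Finset.sum_congr rfl fun k hk => ?_
    rw [Finset.sum_comm]
    rw [← inner_eval' n hn k hk]
    refine Finset.sum_congr rfl fun l hl => ?_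
    rw [← Finset.mul_sum]
    congr 1
    by_cases hd : n ∣ (k + l)
    · rw [if_pos hd]
      have : ζ ^ (k + l) = 1 := by
        obtain ⟨m, hm⟩ := hd
        rw [hm, pow_mul, hζn, one_pow]
      simp [this]
    · rw [if_neg hd]
      have h1 : (ζ ^ (k + l)) ^ n = 1 := by
        rw [← pow_mul, mul_comm, pow_mul, hζn, one_pow]
      have h2 : ζ ^ (k + l) ≠ 1 := fun h => hd ((hζ.pow_eq_one_iff_dvd _).mp h)
      exact geom_zero' h1 h2
  -- combine
  have hIcc : ∑ i ∈ Finset.Icc 1 (n - 1), (g (ζ ^ i)) ^ 2 / (n : ℂ) ^ 2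
      = (∑ i ∈ range n, (g (ζ ^ i)) ^ 2) / (n : ℂ) ^ 2 - (g 1) ^ 2 / (n : ℂ) ^ 2 := by
    rw [Finset.sum_div, hsplit]; ring
  rw [hIcc, hD]
  have hg1 : g 1 = (n : ℂ) * ((n : ℂ) - 1) / 2 := by
    rw [hg]; simp only [one_pow, mul_one]; exact sumA' n
  have hT : ∑ k ∈ range n, (k : ℂ) * ((n : ℂ) - (k : ℂ)) * (n : ℂ)
      = ((n : ℂ) * ((n : ℂ) * ((n : ℂ) - 1) / 2) - (n : ℂ) * ((n : ℂ) - 1) * (2 * (n : ℂ) - 1) / 6) * (n : ℂ) := by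
    rw [← Finset.sum_mul]
    congr 1
    rw [← sumA' n, ← sumB' n, Finset.mul_sum, ← Finset.sum_sub_distrib]
    exact Finset.sum_congr rfl fun k _ => by ring
  rw [hT, hg1]
  field_simp
  ring
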